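/- arXiv:0907.0283 — 2 statements merged into one kernel-verified Lean document; each statement's English description precedes it below -/
import Mathlib

section
/- Let φ be an ℓ-coloring of the k-subsets of {1,…,N} and consider the step-up coloring C of (k+1)-tuples of binary strings of length N: for ε₁ < ⋯ < ε_{k+1} with δ_i = δ(ε_i, ε_{i+1}), if δ₁,…,δ_k is monotone then C = φ({δ₁,…,δ_k}). If a set S of binary strings of size n+1 is monochromatic under C in a color j that C assigns only to tuples with monotone δ-sequences, then {1,…,N} contains a monochromatic n-set in color j under φ. In particular, writing S = {ε₁ < ⋯ < ε_{n+1}}, if δ(ε_1,ε_2),…,δ(ε_n,ε_{n+1}) is monotone, then {δ(ε_1,ε_2),…,δ(ε_n,ε_{n+1})} is a monochromatic set under φ in color j. -/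
/-- Binary value of a binary string of length `N`. -/
def bval {N : ℕ} (ε : Fin N → Bool) : ℕ :=
  ∑ i : Fin N, if ε i then 2 ^ (i : ℕ) else 0

/-- The largest coordinate at which two binary strings differ
(as a natural number; `0` if they agree everywhere). -/
def delta {N : ℕ} (ε ε' : Fin N → Bool) : ℕ :=
  (Finset.univ.filter fun i : Fin N => ε i ≠ ε' i).sup fun i => (i : ℕ)

/-- Monotone (strictly increasing or strictly decreasing) sequence of
consecutive `δ`'s of `ε 0 < ε 1 < ⋯ < ε n`. -/
def DeltaMonotone {N : ℕ} (ε : ℕ → (Fin N → Bool)) (n : ℕ) : Prop :=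
  (∀ i : ℕ, i + 1 < n → delta (ε i) (ε (i + 1)) < delta (ε (i + 1)) (ε (i + 2))) ∨
  (∀ i : ℕ, i + 1 < n → delta (ε (i + 1)) (ε (i + 2)) < delta (ε i) (ε (i + 1)))

lemma sum_range_two_pow_lt (N : ℕ) : ∑ i ∈ Finset.range N, 2 ^ i < 2 ^ N := by
  induction N with
  | zero => simp
  | succ N ih =>
    rw [Finset.sum_range_succ, pow_succ]
    omega

lemma bval_lt {N : ℕ} (x : Fin N → Bool) : bval x < 2 ^ N := by
  have h1 : bval x ≤ ∑ i : Fin N, 2 ^ (i : ℕ) :=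
    Finset.sum_le_sum (fun i _ => by split <;> simp)
  have h2 : ∑ i : Fin N, 2 ^ (i : ℕ) = ∑ i ∈ Finset.range N, 2 ^ i :=
    Fin.sum_univ_eq_sum_range _ _
  exact lt_of_le_of_lt (h1.trans_eq h2) (sum_range_two_pow_lt N)

lemma testBit_bval {N : ℕ} (x : Fin N → Bool) (i : ℕ) :
    (bval x).testBit i = if h : i < N then x ⟨i, h⟩ else false := by
  induction N generalizing i with
  | zero => simp [bval]
  | succ N ih =>
    have hsplit : bval x
        = 2 ^ N * (if x (Fin.last N) then 1 else 0) + bval (fun i => x i.castSucc) := by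
      unfold bval
      rw [Fin.sum_univ_castSucc, add_comm]
      simp [Fin.val_last, mul_ite]
    rw [hsplit, Nat.testBit_two_pow_mul_add _ (bval_lt _)]
    rcases lt_trichotomy i N with h | h | h
    · rw [if_pos h, ih, dif_pos h, dif_pos (Nat.lt_succ_of_lt h)]
      rfl
    · rw [h, if_neg (lt_irrefl _), Nat.sub_self, dif_pos (Nat.lt_succ_self _)]
      have hlast : (⟨N, Nat.lt_succ_self N⟩ : Fin (N + 1)) = Fin.last N := rfl
      rw [hlast]
      rcases hx : x (Fin.last N) with _ | _ <;> simp [hx]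
    · rw [if_neg (by omega), dif_neg (by omega)]
      rcases x (Fin.last N) with _ | _ <;> simp
      · rw [show (1 : ℕ) = 2 ^ 0 from rfl, Nat.testBit_two_pow]
        simp; omega

lemma msb_lt {N : ℕ} {x y : Fin N → Bool} (d : Fin N) (hx : x d = false) (hy : y d = true)
    (h : ∀ i : Fin N, d < i → x i = y i) : bval x < bval y := by
  apply Nat.lt_of_testBit (d : ℕ)
  · rw [testBit_bval, dif_pos d.isLt]
    simpa using hx
  · rw [testBit_bval, dif_pos d.isLt]
    simpa using hy
  · intro j hj
    rw [testBit_bval, testBit_bval]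
    split
    · next h' => exact h ⟨j, h'⟩ hj
    · rfl

lemma delta_spec {N : ℕ} {x y : Fin N → Bool} (hxy : bval x < bval y) :
    ∃ hd : delta x y < N,
      x ⟨delta x y, hd⟩ = false ∧ y ⟨delta x y, hd⟩ = true ∧
        ∀ i : Fin N, delta x y < (i : ℕ) → x i = y i := by
  have hne : (Finset.univ.filter fun i : Fin N => x i ≠ y i).Nonempty := by
    by_contra hcon
    rw [Finset.not_nonempty_iff_eq_empty, Finset.filter_eq_empty_iff] at hcon
    have : x = y := funext fun i => by simpa using hcon (Finset.mem_univ i)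
    rw [this] at hxy; exact lt_irrefl _ hxy
  obtain ⟨b, hb, hsup⟩ := Finset.exists_mem_eq_sup _ hne (fun i : Fin N => (i : ℕ))
  have hdval : delta x y = (b : ℕ) := hsup
  have hd : delta x y < N := by rw [hdval]; exact b.isLt
  have hbeq : (⟨delta x y, hd⟩ : Fin N) = b := Fin.ext hdval
  have hbne : x b ≠ y b := by simpa using (Finset.mem_filter.mp hb).2
  have habove : ∀ i : Fin N, delta x y < (i : ℕ) → x i = y i := by
    intro i hi
    by_contra hne'
    have : (i : ℕ) ≤ delta x y :=
      Finset.le_sup (f := fun i : Fin N => (i : ℕ)) (by simp [hne'])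
    omega
  refine ⟨hd, ?_, ?_, habove⟩ <;> rw [hbeq]
  · rcases hxb : x b with _ | _
    · rfl
    · exfalso
      have hyb : y b = false := by
        rcases hyb : y b with _ | _
        · rfl
        · exact absurd (hxb.trans hyb.symm) hbne
      have : bval y < bval x := msb_lt b hyb hxb fun i hi => (habove i (hdval ▸ hi)).symm
      omega
  · rcases hyb : y b with _ | _
    · exfalso
      have hxb : x b = true := by
        rcases hxb : x b with _ | _
        · exact absurd (hxb.trans hyb.symm) hbne
        · rfl
      have : bval y < bval x := msb_lt b hyb hxb fun i hi => (habove i (hdval ▸ hi)).symm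
      omega
    · rfl

lemma delta_eq {N : ℕ} {x y : Fin N → Bool} {d : ℕ} (hd : d < N)
    (hne : x ⟨d, hd⟩ ≠ y ⟨d, hd⟩) (h : ∀ i : Fin N, d < (i : ℕ) → x i = y i) :
    delta x y = d := by
  apply le_antisymm
  · apply Finset.sup_le
    intro i hi
    by_contra hlt
    push_neg at hlt
    exact (Finset.mem_filter.mp hi).2 (h i hlt)
  · exact Finset.le_sup (f := fun i : Fin N => (i : ℕ)) (b := (⟨d, hd⟩ : Fin N)) (by simp [hne])

lemma delta_trip {N : ℕ} {x y z : Fin N → Bool} (h1 : bval x < bval y) (h2 : bval y < bval z) :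
    delta x y ≠ delta y z ∧ delta x z = max (delta x y) (delta y z) := by
  obtain ⟨hd1, hx1, hy1, ha1⟩ := delta_spec h1
  obtain ⟨hd2, hy2, hz2, ha2⟩ := delta_spec h2
  have hne : delta x y ≠ delta y z := by
    intro h
    rw [show (⟨delta x y, hd1⟩ : Fin N) = ⟨delta y z, hd2⟩ from Fin.ext h] at hy1
    rw [hy1] at hy2
    exact Bool.noConfusion hy2
  refine ⟨hne, ?_⟩
  rcases lt_or_gt_of_ne hne with h | h
  · rw [max_eq_right h.le]
    apply delta_eq hd2
    · rw [ha1 ⟨delta y z, hd2⟩ h, hy2, hz2]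
      simp
    · intro i hi
      rw [ha1 i (lt_trans h hi), ha2 i hi]
  · rw [max_eq_left h.le]
    apply delta_eq hd1
    · rw [hx1, ← ha2 ⟨delta x y, hd1⟩ h, hy1]
      simp
    · intro i hi
      rw [ha1 i hi, ha2 i (lt_trans h hi)]

lemma rel_chain {f : ℕ → ℕ} {n : ℕ} {r : ℕ → ℕ → Prop} (htrans : Transitive r)
    (h : ∀ i, i + 1 < n → r (f i) (f (i + 1))) :
    ∀ a b, a < b → b < n → r (f a) (f b) := by
  intro a b hab hbn
  induction b with
  | zero => omega
  | succ b ih =>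
    rcases Nat.lt_or_ge a b with h' | h'
    · exact htrans (ih h' (by omega)) (h b hbn)
    · have : a = b := by omega
      subst this
      exact h a hbn

lemma chain_inc {N n : ℕ} {ε : ℕ → Fin N → Bool}
    (hinc : ∀ a b : ℕ, a < b → b ≤ n → bval (ε a) < bval (ε b))
    (hI : ∀ i : ℕ, i + 1 < n → delta (ε i) (ε (i + 1)) < delta (ε (i + 1)) (ε (i + 2))) :
    ∀ a b : ℕ, a < b → b ≤ n → delta (ε a) (ε b) = delta (ε (b - 1)) (ε b) := by
  intro a b hab hbn
  induction b with
  | zero => omega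
  | succ b ih =>
    rcases Nat.lt_or_ge a b with h | h
    · have ht := delta_trip (hinc a b h (by omega)) (hinc b (b + 1) (by omega) hbn)
      have hkey : delta (ε (b - 1)) (ε b) < delta (ε b) (ε (b + 1)) := by
        have hb1 : b - 1 + 1 = b := by omega
        have := hI (b - 1) (by omega)
        rw [hb1] at this
        have hb2 : b - 1 + 2 = b + 1 := by omega
        rwa [hb2] at this
      rw [ht.2, ih h (by omega), max_eq_right hkey.le]
      simp
    · have : a = b := by omega
      subst this
      simp

lemma chain_dec {N n : ℕ} {ε : ℕ → Fin N → Bool}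
    (hinc : ∀ a b : ℕ, a < b → b ≤ n → bval (ε a) < bval (ε b))
    (hD : ∀ i : ℕ, i + 1 < n → delta (ε (i + 1)) (ε (i + 2)) < delta (ε i) (ε (i + 1))) :
    ∀ a b : ℕ, a < b → b ≤ n → delta (ε a) (ε b) = delta (ε a) (ε (a + 1)) := by
  intro a b hab hbn
  induction b with
  | zero => omega
  | succ b ih =>
    rcases Nat.lt_or_ge a b with h | h
    · have ht := delta_trip (hinc a b h (by omega)) (hinc b (b + 1) (by omega) hbn)
      have hkey : delta (ε b) (ε (b + 1)) < delta (ε a) (ε (a + 1)) :=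
        rel_chain (f := fun i => delta (ε i) (ε (i + 1))) (r := fun u v => v < u)
          (fun _ _ _ h1 h2 => lt_trans h2 h1) hD a b h (by omega)
      rw [ht.2, ih h (by omega), max_eq_left hkey.le]
    · have : a = b := by omega
      subst this
      rfl

lemma main_common {N ℓ : ℕ} (k n : ℕ) (hk : 1 ≤ k)
    (φ : Finset ℕ → Fin ℓ) (j : Fin ℓ) (ε : ℕ → (Fin N → Bool))
    (hne : ∀ a b : ℕ, a < b → b < n →
      delta (ε a) (ε (a + 1)) ≠ delta (ε b) (ε (b + 1)))
    (hreal : ∀ E : ℕ → ℕ, (∀ a b, a < b → b < k → E a < E b) → (∀ m, m < k → E m + 1 ≤ n) →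
      ∃ g : ℕ → ℕ, (∀ a b : ℕ, a < b → b ≤ k → g a < g b) ∧ g k ≤ n ∧
        ((Finset.range k).image fun m => delta (ε (g m)) (ε (g (m + 1)))) =
          (Finset.range k).image fun m => delta (ε (E m)) (ε (E m + 1)))
    (hC : ∀ g : ℕ → ℕ, (∀ a b : ℕ, a < b → b ≤ k → g a < g b) → g k ≤ n →
      φ ((Finset.range k).image fun i => delta (ε (g i)) (ε (g (i + 1)))) = j) :
    ((Finset.range n).image fun i => delta (ε i) (ε (i + 1))).card = n ∧
      ∀ T : Finset ℕ, T ⊆ (Finset.range n).image (fun i => delta (ε i) (ε (i + 1))) →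
        T.card = k →
        (φ T = j ∧
          ∃ g : ℕ → ℕ, (∀ a b : ℕ, a < b → b ≤ k → g a < g b) ∧ g k ≤ n ∧
            T = (Finset.range k).image fun i => delta (ε (g i)) (ε (g (i + 1)))) := by
  classical
  have hinjOn : Set.InjOn (fun i => delta (ε i) (ε (i + 1))) (Finset.range n) := by
    intro a ha b hb hab
    simp only [Finset.coe_range, Set.mem_Iio] at ha hb
    rcases lt_trichotomy a b with h | h | h
    · exact absurd hab (hne a b h hb)
    · exact h
    · exact absurd hab.symm (hne b a h ha)
  refine ⟨by rw [Finset.card_image_of_injOn hinjOn, Finset.card_range], ?_⟩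
  intro T hT hTk
  set I : Finset ℕ := (Finset.range n).filter (fun i => delta (ε i) (ε (i + 1)) ∈ T) with hIdef
  have hIsub : I ⊆ Finset.range n := Finset.filter_subset _ _
  have hIT : I.image (fun i => delta (ε i) (ε (i + 1))) = T := by
    apply Finset.Subset.antisymm
    · intro t ht
      obtain ⟨i, hi, rfl⟩ := Finset.mem_image.mp ht
      exact (Finset.mem_filter.mp hi).2
    · intro t ht
      obtain ⟨i, hi, rfl⟩ := Finset.mem_image.mp (hT ht)
      exact Finset.mem_image.mpr ⟨i, Finset.mem_filter.mpr ⟨hi, ht⟩, rfl⟩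
  have hIcard : I.card = k := by
    rw [← hTk, ← hIT]
    exact (Finset.card_image_of_injOn (hinjOn.mono (by exact_mod_cast hIsub))).symm
  set e := I.orderEmbOfFin hIcard with he
  set E : ℕ → ℕ := fun m => e ⟨min m (k - 1), by omega⟩ with hE
  have hEI : ∀ m, E m ∈ I := fun m => Finset.orderEmbOfFin_mem I hIcard _
  have hElt : ∀ m, E m < n := fun m => Finset.mem_range.mp (hIsub (hEI m))
  have hEmono : ∀ a b, a < b → b < k → E a < E b := by
    intro a b hab hbk
    apply e.strictMono
    rw [Fin.lt_def]
    simp only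
    omega
  have hIE : I = (Finset.range k).image E := by
    apply Finset.Subset.antisymm
    · intro t ht
      have : t ∈ Set.range e := by rw [Finset.range_orderEmbOfFin]; exact_mod_cast ht
      obtain ⟨m, hm⟩ := this
      refine Finset.mem_image.mpr ⟨(m : ℕ), Finset.mem_range.mpr m.isLt, ?_⟩
      rw [hE]
      simp only
      rw [← hm]
      congr 1
      ext
      have := m.isLt
      simp only
      omega
    · intro t ht
      obtain ⟨m, _, rfl⟩ := Finset.mem_image.mp ht
      exact hEI m
  obtain ⟨g, hg1, hg2, hg3⟩ := hreal E hEmono (fun m _ => hElt m)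
  have himg : ((Finset.range k).image fun m => delta (ε (g m)) (ε (g (m + 1)))) = T := by
    rw [hg3, ← hIT, hIE, Finset.image_image]
    rfl
  exact ⟨by rw [← himg]; exact hC g hg1 hg2, g, hg1, hg2, himg.symm⟩

lemma realize_inc {N n k : ℕ} {ε : ℕ → Fin N → Bool} (hk : 1 ≤ k)
    (hinc : ∀ a b : ℕ, a < b → b ≤ n → bval (ε a) < bval (ε b))
    (hI : ∀ i : ℕ, i + 1 < n → delta (ε i) (ε (i + 1)) < delta (ε (i + 1)) (ε (i + 2))) :
    ∀ E : ℕ → ℕ, (∀ a b, a < b → b < k → E a < E b) → (∀ m, m < k → E m + 1 ≤ n) →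
      ∃ g : ℕ → ℕ, (∀ a b : ℕ, a < b → b ≤ k → g a < g b) ∧ g k ≤ n ∧
        ((Finset.range k).image fun m => delta (ε (g m)) (ε (g (m + 1)))) =
          (Finset.range k).image fun m => delta (ε (E m)) (ε (E m + 1)) := by
  intro E hEmono hElt
  refine ⟨fun m => if m = 0 then E 0 else E (m - 1) + 1, ?_, ?_, ?_⟩
  · intro a b hab hbk
    dsimp only
    rcases Nat.eq_zero_or_pos a with rfl | ha
    · rw [if_pos rfl, if_neg (by omega)]
      rcases Nat.lt_or_ge 1 b with h | h
      · have := hEmono 0 (b - 1) (by omega) (by omega)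
        omega
      · have : b = 1 := by omega
        subst this
        simp
    · rw [if_neg (by omega), if_neg (by omega)]
      have := hEmono (a - 1) (b - 1) (by omega) (by omega)
      omega
  · dsimp only
    rw [if_neg (by omega : ¬ k = 0)]
    have := hElt (k - 1) (by omega)
    omega
  · apply Finset.image_congr
    intro m hm
    simp only [Finset.coe_range, Set.mem_Iio] at hm
    dsimp only
    rcases Nat.eq_zero_or_pos m with rfl | hm0
    · simp
    · simp only [if_neg (by omega : ¬ m = 0), if_neg (by omega : ¬ m + 1 = 0),
        Nat.add_sub_cancel]
      have h1 : E (m - 1) + 1 < E m + 1 := by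
        have := hEmono (m - 1) m (by omega) hm
        omega
      have heq := chain_inc hinc hI (E (m - 1) + 1) (E m + 1) h1 (hElt m hm)
      rw [heq, Nat.add_sub_cancel]

lemma realize_dec {N n k : ℕ} {ε : ℕ → Fin N → Bool} (hk : 1 ≤ k)
    (hinc : ∀ a b : ℕ, a < b → b ≤ n → bval (ε a) < bval (ε b))
    (hD : ∀ i : ℕ, i + 1 < n → delta (ε (i + 1)) (ε (i + 2)) < delta (ε i) (ε (i + 1))) :
    ∀ E : ℕ → ℕ, (∀ a b, a < b → b < k → E a < E b) → (∀ m, m < k → E m + 1 ≤ n) →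
      ∃ g : ℕ → ℕ, (∀ a b : ℕ, a < b → b ≤ k → g a < g b) ∧ g k ≤ n ∧
        ((Finset.range k).image fun m => delta (ε (g m)) (ε (g (m + 1)))) =
          (Finset.range k).image fun m => delta (ε (E m)) (ε (E m + 1)) := by
  intro E hEmono hElt
  refine ⟨fun m => if m < k then E m else E (k - 1) + 1 + (m - k), ?_, ?_, ?_⟩
  · intro a b hab hbk
    dsimp only
    rcases Nat.lt_or_ge b k with h | h
    · rw [if_pos (by omega), if_pos h]
      exact hEmono a b hab h
    · rw [if_pos (by omega), if_neg (by omega)]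
      rcases Nat.lt_or_ge a (k - 1) with h' | h'
      · have := hEmono a (k - 1) h' (by omega)
        omega
      · have : a = k - 1 := by omega
        subst this
        omega
  · dsimp only
    rw [if_neg (by omega)]
    have := hElt (k - 1) (by omega)
    omega
  · apply Finset.image_congr
    intro m hm
    simp only [Finset.coe_range, Set.mem_Iio] at hm
    dsimp only
    rcases Nat.lt_or_ge (m + 1) k with h | h
    · rw [if_pos hm, if_pos h]
      exact chain_dec hinc hD (E m) (E (m + 1)) (hEmono m (m + 1) (by omega) h)
        (by have := hElt (m + 1) h; omega)
    · have hmk : m = k - 1 := by omega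
      rw [if_pos hm, if_neg (by omega)]
      subst hmk
      have h0 : k - 1 + 1 - k = 0 := by omega
      rw [h0]

/-- If `ε 0 < ⋯ < ε n` is a monochromatic set in color `j` under the step-up coloring `C`
(whose tuples all have monotone `δ`-sequences, on which `C` is given by `φ` of the `δ`-set),
then the set `{δ₁, …, δ_n}` of consecutive `δ`'s is a monochromatic `n`-set in color `j`
under `φ`. -/
theorem stepup_monotone_monochromatic {N ℓ : ℕ} (k n : ℕ) (hk : 1 ≤ k) (hkn : k ≤ n)
    (φ : Finset ℕ → Fin ℓ) (j : Fin ℓ)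
    (ε : ℕ → (Fin N → Bool))
    (hinc : ∀ a b : ℕ, a < b → b ≤ n → bval (ε a) < bval (ε b))
    (hmono : DeltaMonotone ε n)
    (hC : ∀ g : ℕ → ℕ, (∀ a b : ℕ, a < b → b ≤ k → g a < g b) → g k ≤ n →
      φ ((Finset.range k).image fun i => delta (ε (g i)) (ε (g (i + 1)))) = j) :
    ((Finset.range n).image fun i => delta (ε i) (ε (i + 1))).card = n ∧
      ∀ T : Finset ℕ, T ⊆ (Finset.range n).image (fun i => delta (ε i) (ε (i + 1))) →
        T.card = k →
        (φ T = j ∧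
          ∃ g : ℕ → ℕ, (∀ a b : ℕ, a < b → b ≤ k → g a < g b) ∧ g k ≤ n ∧
            T = (Finset.range k).image fun i => delta (ε (g i)) (ε (g (i + 1)))) := by
  rcases hmono with hI | hD
  · exact main_common k n hk φ j ε
      (fun a b hab hbn =>
        (rel_chain (f := fun i => delta (ε i) (ε (i + 1))) (r := (· < ·)) (fun _ _ _ h1 h2 => Nat.lt_trans h1 h2) hI a b hab hbn).ne)
      (realize_inc hk hinc hI) hC
  · exact main_common k n hk φ j ε
      (fun a b hab hbn =>
        (rel_chain (f := fun i => delta (ε i) (ε (i + 1))) (r := fun u v => v < u) (fun _ _ _ h1 h2 => Nat.lt_trans h2 h1) hD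
          a b hab hbn).ne')
      (realize_dec hk hinc hD) hC
end

section
/- For every n > 2, there exists a 2-coloring of the pairs of a set of size ⌊2^{n/2}⌋ with no monochromatic set of size n; that is, 2^{n/2} ↛ (n)^2. -/
open Finset

/-- `NoMono N k ℓ n` is the negative partition relation `N ↛ (n)_ℓ^k`:
there is an `ℓ`-coloring of the `k`-subsets of an `N`-set such that no `n`-set
is monochromatic (i.e. every `n`-set contains two `k`-subsets of different colors). -/
def NoMono (N k ℓ n : ℕ) : Prop :=
  ∃ c : Finset (Fin N) → Fin ℓ, ∀ S : Finset (Fin N), S.card = n →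
    ∃ T₁ T₂ : Finset (Fin N), T₁ ⊆ S ∧ T₂ ⊆ S ∧ T₁.card = k ∧ T₂.card = k ∧ c T₁ ≠ c T₂

/-- The number of functions to `Fin 2` prescribed on a set `A` is `2 ^ (card γ - card A)`. -/
lemma card_prescribed {γ : Type*} [Fintype γ] [DecidableEq γ] (A : Finset γ) (v : Fin 2) :
    (univ.filter (fun c : γ → Fin 2 => ∀ a ∈ A, c a = v)).card
      = 2 ^ (Fintype.card γ - A.card) := by
  classical
  rw [← Fintype.card_subtype]
  have e : {c : γ → Fin 2 // ∀ a ∈ A, c a = v} ≃ (↥(Aᶜ) → Fin 2) :=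
    { toFun := fun c x => c.1 x.1
      invFun := fun f => ⟨fun a => if h : a ∈ A then v else f ⟨a, by simpa using h⟩,
        fun a ha => dif_pos ha⟩
      left_inv := by
        rintro ⟨c, hc⟩
        ext a
        by_cases h : a ∈ A
        · simp [h, hc a h]
        · simp [h]
      right_inv := by
        intro f
        ext x
        have hx : x.1 ∉ A := Finset.mem_compl.mp x.2
        simp [hx] }
  rw [Fintype.card_congr e, Fintype.card_fun, Fintype.card_coe, card_compl]
  simp

lemma two_rpow_lt_factorial (n : ℕ) (hn : 3 ≤ n) :
    (2 : ℝ) ^ (1 + (n : ℝ) / 2) < n.factorial := by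
  induction n with
  | zero => omega
  | succ m ih =>
    rcases Nat.lt_or_ge m 3 with h | h
    · -- base case m + 1 = 3
      have hm : m = 2 := by omega
      subst hm
      have hx : (0 : ℝ) ≤ (2 : ℝ) ^ (1 + (3 : ℝ) / 2) := le_of_lt (Real.rpow_pos_of_pos two_pos _)
      have hsq : ((2 : ℝ) ^ (1 + (3 : ℝ) / 2)) ^ 2 = 32 := by
        rw [← Real.rpow_natCast ((2:ℝ) ^ (1 + (3:ℝ)/2)) 2, ← Real.rpow_mul (by norm_num)]
        norm_num
      have h6 : ((2 : ℕ) + 1).factorial = 6 := by decide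
      rw [h6]
      push_cast
      nlinarith [hx, hsq]
    · have h2 : (2 : ℝ) ^ (1 + ((m : ℝ) + 1) / 2)
          = (2 : ℝ) ^ (1 + (m : ℝ) / 2) * (2 : ℝ) ^ ((1 : ℝ) / 2) := by
        rw [← Real.rpow_add two_pos]
        ring_nf
      have hroot : (2 : ℝ) ^ ((1 : ℝ) / 2) < 2 := by
        have h12 : (2 : ℝ) ^ ((1 : ℝ) / 2) < (2 : ℝ) ^ (1 : ℝ) :=
          (Real.rpow_lt_rpow_left_iff (by norm_num : (1:ℝ) < 2)).mpr (by norm_num)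
        simpa using h12
      have ihm := ih h
      have hfac : (m.factorial : ℝ) * 2 ≤ ((m + 1).factorial : ℝ) := by
        rw [Nat.factorial_succ]
        push_cast
        have : (2 : ℝ) ≤ (m : ℝ) + 1 := by
          have : (1 : ℝ) ≤ (m : ℝ) := by exact_mod_cast Nat.one_le_iff_ne_zero.mpr (by omega)
          linarith
        nlinarith [(Nat.cast_pos (α := ℝ)).mpr (Nat.factorial_pos m)]
      have hpos : (0 : ℝ) < (2 : ℝ) ^ (1 + (m : ℝ) / 2) := Real.rpow_pos_of_pos two_pos _
      push_cast
      push_cast at h2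
      rw [h2]
      calc (2 : ℝ) ^ (1 + (m : ℝ) / 2) * (2 : ℝ) ^ ((1 : ℝ) / 2)
          < (m.factorial : ℝ) * 2 := by
            apply mul_lt_mul' (le_of_lt ihm) hroot (le_of_lt (Real.rpow_pos_of_pos two_pos _))
            exact_mod_cast Nat.factorial_pos m
        _ ≤ ((m + 1).factorial : ℝ) := hfac

/-- The key counting estimate: `2 * C(N, n) < 2 ^ C(n, 2)` for `N = ⌊2^{n/2}⌋`. -/
lemma two_mul_choose_lt (n : ℕ) (hn : 2 < n) :
    2 * (Nat.choose ⌊(2 : ℝ) ^ ((n : ℝ) / 2)⌋₊ n) < 2 ^ (n.choose 2) := by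
  set N := ⌊(2 : ℝ) ^ ((n : ℝ) / 2)⌋₊ with hN
  have hNle : (N : ℝ) ≤ (2 : ℝ) ^ ((n : ℝ) / 2) := Nat.floor_le (le_of_lt (Real.rpow_pos_of_pos two_pos _))
  have hchoose : (N.choose n : ℝ) ≤ ((N : ℝ) ^ n) / n.factorial := by
    have := Nat.choose_le_pow_div (α := ℝ) n N
    simpa using this
  have hpowN : ((N : ℝ) ^ n) ≤ (2 : ℝ) ^ ((n : ℝ) ^ 2 / 2) := by
    calc ((N : ℝ) ^ n) ≤ ((2 : ℝ) ^ ((n : ℝ) / 2)) ^ n := by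
          exact pow_le_pow_left₀ (by positivity) hNle n
      _ = (2 : ℝ) ^ ((n : ℝ) ^ 2 / 2) := by
          rw [← Real.rpow_natCast ((2:ℝ) ^ ((n:ℝ)/2)) n, ← Real.rpow_mul (by norm_num)]
          ring_nf
  have hq : ((n.choose 2 : ℕ) : ℝ) = ((n : ℝ) ^ 2 - n) / 2 := by
    rw [Nat.cast_choose_two]
    ring
  have hkey : (2 : ℝ) ^ (1 + (n : ℝ) / 2) < n.factorial := two_rpow_lt_factorial n hn
  have hfacpos : (0 : ℝ) < n.factorial := by exact_mod_cast Nat.factorial_pos n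
  have hcf : (n.factorial : ℝ) * (N.choose n) ≤ (N : ℝ) ^ n := by
    have h1 := Nat.descFactorial_le_pow N n
    have h2 := Nat.descFactorial_eq_factorial_mul_choose N n
    have h3 : n.factorial * N.choose n ≤ N ^ n := by rw [← h2]; exact h1
    exact_mod_cast h3
  have hprod : (2 : ℝ) ^ (((n : ℝ) ^ 2 - n) / 2) * ((2 : ℝ) ^ (1 + (n : ℝ) / 2))
      = 2 * (2 : ℝ) ^ ((n : ℝ) ^ 2 / 2) := by
    rw [← Real.rpow_add two_pos,
      show ((n : ℝ) ^ 2 - n) / 2 + (1 + (n : ℝ) / 2) = 1 + (n : ℝ) ^ 2 / 2 by ring,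
      Real.rpow_add two_pos]
    norm_num
  have hmul : 2 * (N.choose n : ℝ) * n.factorial
      < (2 : ℝ) ^ (((n : ℝ) ^ 2 - n) / 2) * n.factorial := by
    calc 2 * (N.choose n : ℝ) * n.factorial = 2 * ((n.factorial : ℝ) * N.choose n) := by ring
      _ ≤ 2 * (N : ℝ) ^ n := by linarith
      _ ≤ 2 * (2 : ℝ) ^ ((n : ℝ) ^ 2 / 2) := by linarith
      _ = (2 : ℝ) ^ (((n : ℝ) ^ 2 - n) / 2) * ((2 : ℝ) ^ (1 + (n : ℝ) / 2)) := hprod.symm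
      _ < (2 : ℝ) ^ (((n : ℝ) ^ 2 - n) / 2) * n.factorial :=
          mul_lt_mul_of_pos_left hkey (Real.rpow_pos_of_pos two_pos _)
  have hmain : (2 : ℝ) * (N.choose n : ℝ) < (2 : ℝ) ^ (((n.choose 2 : ℕ) : ℝ)) := by
    rw [hq]
    exact lt_of_mul_lt_mul_right hmul (le_of_lt hfacpos)
  have : (2 : ℝ) * (N.choose n : ℝ) < ((2 ^ (n.choose 2) : ℕ) : ℝ) := by
    rw [Real.rpow_natCast] at hmain
    push_cast
    exact_mod_cast hmain
  exact_mod_cast this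

/-- The Erdős lower bound for graph Ramsey numbers: `2^{n/2} ↛ (n)^2` for `n > 2`. -/
theorem erdos_lower_bound (n : ℕ) (hn : 2 < n) :
    NoMono (⌊(2 : ℝ) ^ ((n : ℝ) / 2)⌋₊) 2 2 n := by
  classical
  set N := ⌊(2 : ℝ) ^ ((n : ℝ) / 2)⌋₊ with hNdef
  by_contra hcon
  unfold NoMono at hcon
  push_neg at hcon
  -- every coloring has a monochromatic n-set
  set D := Fintype.card (Finset (Fin N)) with hD
  set q := n.choose 2 with hqdef
  -- there exists an n-set at all (from any coloring), giving q ≤ D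
  obtain ⟨S₀, hS₀, _⟩ := hcon (fun _ => 0)
  have hqD : q ≤ D := by
    have h1 : (powersetCard 2 S₀).card = q := by
      rw [card_powersetCard, hS₀]
    calc q = (powersetCard 2 S₀).card := h1.symm
      _ ≤ (univ : Finset (Finset (Fin N))).card := card_le_card (subset_univ _)
      _ = D := by rw [card_univ]
  have hsub : (univ : Finset (Finset (Fin N) → Fin 2)) ⊆
      ((powersetCard n (univ : Finset (Fin N))) ×ˢ (univ : Finset (Fin 2))).biUnion
        (fun p => univ.filter fun c => ∀ a ∈ powersetCard 2 p.1, c a = p.2) := by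
    intro c _
    obtain ⟨S, hS, hmono⟩ := hcon c
    have h2S : 2 ≤ S.card := by omega
    obtain ⟨T₀, hT₀⟩ := (Finset.powersetCard_nonempty.mpr (by omega : 2 ≤ S.card))
    rw [mem_biUnion]
    refine ⟨(S, c T₀), ?_, ?_⟩
    · rw [mem_product, mem_powersetCard]
      exact ⟨⟨subset_univ S, hS⟩, mem_univ _⟩
    · rw [mem_filter]
      refine ⟨mem_univ _, ?_⟩
      intro a ha
      rw [mem_powersetCard] at ha
      rw [mem_powersetCard] at hT₀
      exact hmono a T₀ ha.1 hT₀.1 ha.2 hT₀.2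
  have hcard := card_le_card hsub
  have hUnivCard : (univ : Finset (Finset (Fin N) → Fin 2)).card = 2 ^ D := by
    rw [card_univ, Fintype.card_fun, Fintype.card_fin]
  have hbUnion : (((powersetCard n (univ : Finset (Fin N))) ×ˢ (univ : Finset (Fin 2))).biUnion
        (fun p => univ.filter fun c : Finset (Fin N) → Fin 2 =>
          ∀ a ∈ powersetCard 2 p.1, c a = p.2)).card
      ≤ (N.choose n * 2) * 2 ^ (D - q) := by
    calc _ ≤ ∑ p ∈ (powersetCard n (univ : Finset (Fin N))) ×ˢ (univ : Finset (Fin 2)),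
          (univ.filter fun c : Finset (Fin N) → Fin 2 =>
            ∀ a ∈ powersetCard 2 p.1, c a = p.2).card := card_biUnion_le
      _ = ∑ p ∈ (powersetCard n (univ : Finset (Fin N))) ×ˢ (univ : Finset (Fin 2)),
          2 ^ (D - q) := by
          apply Finset.sum_congr rfl
          intro p hp
          rw [mem_product, mem_powersetCard] at hp
          rw [card_prescribed, card_powersetCard, hp.1.2]
      _ = (N.choose n * 2) * 2 ^ (D - q) := by
          rw [Finset.sum_const, smul_eq_mul, card_product, card_powersetCard]
          simp
  have hfinal : 2 ^ D ≤ (N.choose n * 2) * 2 ^ (D - q) := by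
    rw [← hUnivCard]
    exact hcard.trans hbUnion
  have hsplit : 2 ^ D = 2 ^ q * 2 ^ (D - q) := by
    rw [← pow_add, Nat.add_sub_cancel' hqD]
  rw [hsplit] at hfinal
  have h2q : 2 ^ q ≤ N.choose n * 2 :=
    Nat.le_of_mul_le_mul_right hfinal (Nat.pow_pos (by norm_num))
  have hlt := two_mul_choose_lt n hn
  rw [← hNdef, ← hqdef] at hlt
  rw [mul_comm] at h2q
  exact absurd h2q (not_le.mpr hlt)
end
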